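/- Let U(ω) = e^{-itωZ} e^{itH_ω} where H_ω = V + ωZ with V, Z Hermitian n×n matrices and t > 0. Then for any ω, ω' ∈ ℝ, ‖U(ω') − U(ω)‖ ≤ t² |ω' − ω| · ‖[Z, V]‖. -/

import Mathlib

open NormedSpace

set_option maxHeartbeats 2000000
set_option synthInstance.maxHeartbeats 1000000

namespace Stmt19Aux


variable {n : ℕ}

local notation "𝓔" => (EuclideanSpace ℂ (Fin n) →L[ℂ] EuclideanSpace ℂ (Fin n))

noncomputable instance : NormedAlgebra ℚ 𝓔 := NormedAlgebra.restrictScalars ℚ ℂ 𝓔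

lemma norm_unitary_le {u : 𝓔} (hu : u ∈ unitary 𝓔) : ‖u‖ ≤ 1 := by
  have h1 : star u * u = 1 := hu.1
  have h2 : ‖star u * u‖ = ‖u‖ * ‖u‖ := CStarRing.norm_star_mul_self (x := u)
  rw [h1] at h2
  have h3 : ‖(1 : 𝓔)‖ ≤ 1 := by
    rw [ContinuousLinearMap.one_def]; exact ContinuousLinearMap.norm_id_le
  nlinarith [norm_nonneg u, sq_nonneg (‖u‖ - 1)]

lemma norm_exp_le (A : 𝓔) (hA : IsSelfAdjoint A) (c : ℂ) (hc : star c = -c) :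
    ‖exp (c • A)‖ ≤ 1 := by
  apply norm_unitary_le
  apply exp_mem_unitary_of_mem_skewAdjoint
  rw [skewAdjoint.mem_iff, star_smul, hA.star_eq, hc]; exact neg_smul c A

lemma smul_collapse (μ : ℝ) (c : ℂ) (A : 𝓔) : μ • (c • A) = ((μ : ℂ) * c) • A := by
  rw [← smul_assoc]; congr 1

lemma norm_exp_smul_le (A : 𝓔) (hA : IsSelfAdjoint A) (c : ℂ) (hc : star c = -c) (μ : ℝ) :
    ‖exp (μ • (c • A))‖ ≤ 1 := by
  rw [smul_collapse]
  refine norm_exp_le A hA _ ?_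
  rw [star_mul', hc, Complex.star_def, Complex.conj_ofReal]; ring

lemma exp_mul_exp_neg (x : 𝓔) : exp x * exp (-x) = 1 := by
  rw [← exp_add_of_commute (Commute.refl x).neg_right, add_neg_cancel, NormedSpace.exp_zero]

lemma exp_neg_mul_exp (x : 𝓔) : exp (-x) * exp x = 1 := by
  rw [← exp_add_of_commute (Commute.refl x).neg_left, neg_add_cancel, NormedSpace.exp_zero]

lemma swap_smul (c : ℂ) (a b : ℝ) (A : 𝓔) :
    a • ((c * (b : ℂ)) • A) = b • ((c * (a : ℂ)) • A) := by
  rw [smul_collapse, smul_collapse]; congr 1; ring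

instance : SMulCommClass ℝ 𝓔 𝓔 :=
  ⟨fun r a b => ContinuousLinearMap.ext fun x => (a.map_smul_of_tower r (b x)).symm⟩

instance : IsScalarTower ℝ 𝓔 𝓔 :=
  ⟨fun _ _ _ => ContinuousLinearMap.ext fun _ => rfl⟩


lemma star_neg_I_mul (r : ℝ) : star ((-Complex.I) * (r : ℂ)) = -((-Complex.I) * (r : ℂ)) := by
  simp only [star_mul', star_neg, Complex.star_def, Complex.conj_ofReal, Complex.conj_I]
  ring

lemma star_I_mul (r : ℝ) : star (Complex.I * (r : ℂ)) = -(Complex.I * (r : ℂ)) := by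
  simp only [star_mul', Complex.star_def, Complex.conj_ofReal, Complex.conj_I]
  ring

lemma keyB (V Z : 𝓔) (hZ : IsSelfAdjoint Z) (s : ℝ) (hs : 0 ≤ s) (ω ω' : ℝ) :
    ‖exp (ω' • (((-Complex.I) * (s : ℂ)) • Z)) * V * exp (ω' • ((Complex.I * (s : ℂ)) • Z))
      - exp (ω • (((-Complex.I) * (s : ℂ)) • Z)) * V * exp (ω • ((Complex.I * (s : ℂ)) • Z))‖
      ≤ s * |ω' - ω| * ‖Z * V - V * Z‖ := by
  set Bm : 𝓔 := ((-Complex.I) * (s : ℂ)) • Z with hBm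
  set Bp : 𝓔 := (Complex.I * (s : ℂ)) • Z with hBp
  set D : ℝ → 𝓔 := fun μ => exp (μ • Bm) * (Bm * V + V * Bp) * exp (μ • Bp) with hD
  have hder : ∀ μ : ℝ, HasDerivAt
      (fun μ : ℝ => exp (μ • Bm) * V * exp (μ • Bp)) (D μ) μ := by
    intro μ
    have h1 := hasDerivAt_exp_smul_const' (𝕂 := ℝ) Bm μ
    have h2 := hasDerivAt_exp_smul_const (𝕂 := ℝ) Bp μ
    have h := (h1.mul_const V).mul h2
    refine HasDerivAt.congr_deriv h ?_
    have c1 : Bm * exp (μ • Bm) = exp (μ • Bm) * Bm :=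
      (((Commute.refl Bm).smul_right μ).exp_right).eq
    have c2 : exp (μ • Bp) * Bp = Bp * exp (μ • Bp) :=
      (((Commute.refl Bp).smul_right μ).exp_right).symm.eq
    rw [hD]
    simp only [c1, c2]
    noncomm_ring
  have hDb : ∀ μ : ℝ, ‖D μ‖ ≤ s * ‖Z * V - V * Z‖ := by
    intro μ
    have hmid : Bm * V + V * Bp = (Complex.I * (s : ℂ)) • (V * Z - Z * V) := by
      rw [hBm, hBp, smul_mul_assoc, mul_smul_comm, smul_sub]
      module
    have h1 : ‖exp (μ • Bm)‖ ≤ 1 := norm_exp_smul_le Z hZ _ (star_neg_I_mul s) μ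
    have h2 : ‖exp (μ • Bp)‖ ≤ 1 := norm_exp_smul_le Z hZ _ (star_I_mul s) μ
    have hmidn : ‖Bm * V + V * Bp‖ = s * ‖Z * V - V * Z‖ := by
      have hcoef : ‖Complex.I * (s:ℂ)‖ = s := by
        rw [norm_mul, Complex.norm_I, one_mul, Complex.norm_real, Real.norm_eq_abs,
          abs_of_nonneg hs]
      rw [hmid, norm_smul (Complex.I * (s:ℂ)) (V * Z - Z * V), hcoef, norm_sub_rev (V * Z)]
    calc ‖D μ‖ ≤ ‖exp (μ • Bm) * (Bm * V + V * Bp)‖ * ‖exp (μ • Bp)‖ := norm_mul_le _ _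
      _ ≤ ‖exp (μ • Bm)‖ * ‖Bm * V + V * Bp‖ * ‖exp (μ • Bp)‖ := by
          exact mul_le_mul_of_nonneg_right (norm_mul_le _ _) (norm_nonneg _)
      _ ≤ 1 * (s * ‖Z * V - V * Z‖) * 1 := by
          rw [hmidn]
          apply mul_le_mul _ h2 (norm_nonneg _) (by positivity)
          exact mul_le_mul_of_nonneg_right h1 (by positivity)
      _ = s * ‖Z * V - V * Z‖ := by ring
  have := (convex_univ : Convex ℝ (Set.univ : Set ℝ)).norm_image_sub_le_of_norm_hasDerivWithin_le
      (f' := D) (fun x _ => (hder x).hasDerivWithinAt) (fun x _ => hDb x)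
      (Set.mem_univ ω) (Set.mem_univ ω')
  calc _ ≤ s * ‖Z * V - V * Z‖ * ‖ω' - ω‖ := this
    _ = s * |ω' - ω| * ‖Z * V - V * Z‖ := by rw [Real.norm_eq_abs]; ring



lemma keyC (V Z : 𝓔) (hV : IsSelfAdjoint V) (hZ : IsSelfAdjoint Z)
    (t : ℝ) (ht : 0 < t) (ω ω' : ℝ) :
    ‖exp ((-(Complex.I * ((t:ℂ) * (ω':ℂ)))) • Z) * exp ((Complex.I * (t:ℂ)) • (V + (ω' : ℂ) • Z)) -
        exp ((-(Complex.I * ((t:ℂ) * (ω:ℂ)))) • Z) * exp ((Complex.I * (t:ℂ)) • (V + (ω : ℂ) • Z))‖ ≤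
      t ^ 2 * |ω' - ω| * ‖Z * V - V * Z‖ := by
  have hωsa : IsSelfAdjoint ((ω : ℂ)) := by
    rw [IsSelfAdjoint, Complex.star_def, Complex.conj_ofReal]
  have hω'sa : IsSelfAdjoint ((ω' : ℂ)) := by
    rw [IsSelfAdjoint, Complex.star_def, Complex.conj_ofReal]
  set Hw : 𝓔 := V + (ω : ℂ) • Z with hHw
  set Hw' : 𝓔 := V + (ω' : ℂ) • Z with hHw'
  have hHsa : IsSelfAdjoint Hw := IsSelfAdjoint.add (R := 𝓔) hV (hωsa.smul hZ)
  have hH'sa : IsSelfAdjoint Hw' := IsSelfAdjoint.add (R := 𝓔) hV (hω'sa.smul hZ)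
  set A1 : 𝓔 := (-Complex.I) • Hw' with hA1
  set A2 : 𝓔 := (Complex.I * (ω' : ℂ)) • Z with hA2
  set A3 : 𝓔 := ((-Complex.I) * (ω : ℂ)) • Z with hA3
  set A4 : 𝓔 := Complex.I • Hw with hA4
  have hA2neg : -A2 = ((-Complex.I) * (ω' : ℂ)) • Z := by
    rw [hA2]; module
  have hA3neg : -A3 = (Complex.I * (ω : ℂ)) • Z := by
    rw [hA3]; module
  have hsI : star (-Complex.I) = -(-Complex.I) := by
    rw [star_neg, Complex.star_def, Complex.conj_I, neg_neg]
  have hsI' : star (Complex.I) = -(Complex.I) := Complex.conj_I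
  set G : ℝ → 𝓔 := fun u =>
    exp (u • A1) * exp (u • A2) * exp (u • A3) * exp (u • A4) with hGdef
  set D : ℝ → 𝓔 := fun u => Complex.I •
    (exp (u • A1) *
      ((exp (u • A2) * exp (u • A3)) * V - V * (exp (u • A2) * exp (u • A3))) *
      exp (u • A4)) with hDdef
  -- derivative of G
  have hG : ∀ u : ℝ, HasDerivAt G (D u) u := by
    intro u
    have d1 := hasDerivAt_exp_smul_const (𝕂 := ℝ) A1 u
    have d2 := hasDerivAt_exp_smul_const' (𝕂 := ℝ) A2 u
    have d3 := hasDerivAt_exp_smul_const' (𝕂 := ℝ) A3 u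
    have d4 := hasDerivAt_exp_smul_const' (𝕂 := ℝ) A4 u
    have h := ((d1.mul d2).mul d3).mul d4
    have c3 : A3 * exp (u • A3) = exp (u • A3) * A3 :=
      (((Commute.refl A3).smul_right u).exp_right).eq
    have h12 : A1 + A2 = (-Complex.I) • V := by
      rw [hA1, hA2, hHw']; module
    have h34 : A3 + A4 = Complex.I • V := by
      rw [hA3, hA4, hHw]; module
    refine HasDerivAt.congr_deriv h (Eq.symm ?_)
    set e1 := exp (u • A1)
    set e2 := exp (u • A2)
    set e3 := exp (u • A3)
    set e4 := exp (u • A4)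
    have expand : (((e1 * A1) * e2 + e1 * (A2 * e2)) * e3 + (e1 * e2) * (A3 * e3)) * e4
        + ((e1 * e2) * e3) * (A4 * e4)
        = e1 * ((A1 + A2) * (e2 * e3)) * e4 + e1 * ((e2 * e3) * (A3 + A4)) * e4 := by
      rw [c3]; noncomm_ring
    rw [hDdef]
    show Complex.I • (e1 * ((e2 * e3) * V - V * (e2 * e3)) * e4) =
      (((e1 * A1) * e2 + e1 * (A2 * e2)) * e3 + (e1 * e2) * (A3 * e3)) * e4
        + ((e1 * e2) * e3) * (A4 * e4)
    rw [expand, h12, h34]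
    simp only [smul_mul_assoc, mul_smul_comm, mul_sub, sub_mul, smul_sub, neg_smul]
    module
  -- norm bound on the derivative
  have hDb : ∀ u ∈ Set.Icc (0:ℝ) t, ‖D u‖ ≤ t * |ω' - ω| * ‖Z * V - V * Z‖ := by
    rintro u ⟨hu0, hut⟩
    set e1 := exp (u • A1) with he1
    set e2 := exp (u • A2) with he2
    set e3 := exp (u • A3) with he3
    set e4 := exp (u • A4) with he4
    set e2' := exp (u • (-A2)) with he2'
    set e3' := exp (u • (-A3)) with he3'
    have hne1 : ‖e1‖ ≤ 1 := norm_exp_smul_le Hw' hH'sa _ hsI u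
    have hne4 : ‖e4‖ ≤ 1 := norm_exp_smul_le Hw hHsa _ hsI' u
    have hne2 : ‖e2‖ ≤ 1 := by
      rw [he2, hA2]; exact norm_exp_smul_le Z hZ _ (star_I_mul ω') u
    have hne3 : ‖e3‖ ≤ 1 := by
      rw [he3, hA3]; exact norm_exp_smul_le Z hZ _ (star_neg_I_mul ω) u
    have hne2' : ‖e2'‖ ≤ 1 := by
      rw [he2', hA2neg]; exact norm_exp_smul_le Z hZ _ (star_neg_I_mul ω') u
    have hne3' : ‖e3'‖ ≤ 1 := by
      rw [he3', hA3neg]; exact norm_exp_smul_le Z hZ _ (star_I_mul ω) u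
    have hsmulneg : ∀ x : 𝓔, u • -x = -(u • x) := fun x => by module
    have h22 : e2 * e2' = 1 := by rw [he2, he2', hsmulneg]; exact exp_mul_exp_neg _
    have h22' : e2' * e2 = 1 := by rw [he2, he2', hsmulneg]; exact exp_neg_mul_exp _
    have h33 : e3 * e3' = 1 := by rw [he3, he3', hsmulneg]; exact exp_mul_exp_neg _
    have h33' : e3' * e3 = 1 := by rw [he3, he3', hsmulneg]; exact exp_neg_mul_exp _
    set P := e2 * e3 with hP
    set Q := e3' * e2' with hQ
    have hQP : Q * P = 1 := by
      have : Q * P = e3' * ((e2' * e2) * e3) := by rw [hP, hQ]; noncomm_ring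
      rw [this, h22', one_mul, h33']
    -- the key Duhamel estimate
    have hkey : ‖e3 * V * e3' - e2' * V * e2‖ ≤ u * |ω - ω'| * ‖Z * V - V * Z‖ := by
      have r3 : u • A3 = ω • (((-Complex.I) * (u:ℂ)) • Z) := by
        rw [hA3]; exact swap_smul (-Complex.I) u ω Z
      have r3' : u • (-A3) = ω • ((Complex.I * (u:ℂ)) • Z) := by
        rw [hA3neg]; exact swap_smul Complex.I u ω Z
      have r2 : u • A2 = ω' • ((Complex.I * (u:ℂ)) • Z) := by
        rw [hA2]; exact swap_smul Complex.I u ω' Z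
      have r2' : u • (-A2) = ω' • (((-Complex.I) * (u:ℂ)) • Z) := by
        rw [hA2neg]; exact swap_smul (-Complex.I) u ω' Z
      rw [he3, he3', he2, he2', r3, r3', r2, r2']
      exact keyB V Z hZ u hu0 ω' ω
    have habs : |ω - ω'| = |ω' - ω| := abs_sub_comm _ _
    -- assemble
    have step2 : P * V * Q - V = e2 * (e3 * V * e3' - e2' * V * e2) * e2' := by
      have hx : e2 * (e3 * V * e3') * e2' = P * V * Q := by rw [hP, hQ]; noncomm_ring
      have hy : e2 * (e2' * V * e2) * e2' = (e2 * e2') * V * (e2 * e2') := by noncomm_ring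
      rw [mul_sub, sub_mul, hx, hy, h22, one_mul, mul_one]
    have step1 : P * V - V * P = (P * V * Q - V) * P := by
      rw [sub_mul, mul_assoc (P * V) Q P, hQP, mul_one]
    have hnP : ‖P‖ ≤ 1 := by
      refine le_trans (norm_mul_le _ _) ?_
      nlinarith [norm_nonneg e2, norm_nonneg e3]
    have hmid : ‖P * V - V * P‖ ≤ u * |ω' - ω| * ‖Z * V - V * Z‖ := by
      rw [step1]
      calc ‖(P * V * Q - V) * P‖ ≤ ‖P * V * Q - V‖ * ‖P‖ := norm_mul_le _ _
        _ ≤ ‖P * V * Q - V‖ * 1 :=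
            mul_le_mul_of_nonneg_left hnP (norm_nonneg _)
        _ = ‖e2 * (e3 * V * e3' - e2' * V * e2) * e2'‖ := by rw [mul_one, step2]
        _ ≤ ‖e2‖ * ‖e3 * V * e3' - e2' * V * e2‖ * ‖e2'‖ := by
            refine le_trans (norm_mul_le _ _) ?_
            exact mul_le_mul_of_nonneg_right (norm_mul_le _ _) (norm_nonneg _)
        _ ≤ 1 * (u * |ω - ω'| * ‖Z * V - V * Z‖) * 1 := by
            have h0 : (0:ℝ) ≤ u * |ω - ω'| * ‖Z * V - V * Z‖ := by positivity
            refine mul_le_mul (mul_le_mul hne2 hkey (norm_nonneg _) ?_) hne2'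
              (norm_nonneg _) ?_
            · linarith
            · positivity
        _ = u * |ω' - ω| * ‖Z * V - V * Z‖ := by rw [habs]; ring
    have hDnorm : ‖D u‖ = ‖e1 * (P * V - V * P) * e4‖ := by
      rw [hDdef]
      show ‖Complex.I • (e1 * ((e2 * e3) * V - V * (e2 * e3)) * e4)‖ = _
      rw [norm_smul Complex.I (e1 * ((e2 * e3) * V - V * (e2 * e3)) * e4), Complex.norm_I,
        one_mul, hP]
    have hfinal : ‖e1 * (P * V - V * P) * e4‖ ≤ u * |ω' - ω| * ‖Z * V - V * Z‖ := by
      calc ‖e1 * (P * V - V * P) * e4‖ ≤ ‖e1‖ * ‖P * V - V * P‖ * ‖e4‖ := by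
            refine le_trans (norm_mul_le _ _) ?_
            exact mul_le_mul_of_nonneg_right (norm_mul_le _ _) (norm_nonneg _)
        _ ≤ 1 * (u * |ω' - ω| * ‖Z * V - V * Z‖) * 1 := by
            refine mul_le_mul (mul_le_mul hne1 hmid (norm_nonneg _) ?_) hne4
              (norm_nonneg _) ?_
            · linarith
            · positivity
        _ = u * |ω' - ω| * ‖Z * V - V * Z‖ := by ring
    rw [hDnorm]
    refine le_trans hfinal ?_
    have : (0:ℝ) ≤ |ω' - ω| * ‖Z * V - V * Z‖ := by positivity
    nlinarith
  -- mean value inequality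
  have hG0 : G 0 = 1 := by
    rw [hGdef]
    show exp ((0:ℝ) • A1) * exp ((0:ℝ) • A2) * exp ((0:ℝ) • A3) * exp ((0:ℝ) • A4) = 1
    have hz : ∀ x : 𝓔, (0:ℝ) • x = 0 := fun x => by module
    rw [hz, hz, hz, hz, NormedSpace.exp_zero, one_mul, one_mul, one_mul]
  have hmvt := (convex_Icc (0:ℝ) t).norm_image_sub_le_of_norm_hasDerivWithin_le
      (f' := D) (fun x _ => (hG x).hasDerivWithinAt) hDb
      (Set.left_mem_Icc.2 ht.le) (Set.right_mem_Icc.2 ht.le)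
  -- hmvt : ‖G t - G 0‖ ≤ (t * |ω' - ω| * ‖Z * V - V * Z‖) * ‖t - 0‖
  -- algebraic identification
  set X1' := exp ((-(Complex.I * ((t:ℂ) * (ω':ℂ)))) • Z) with hX1'
  set X2' := exp ((Complex.I * (t:ℂ)) • Hw') with hX2'
  set X1 := exp ((-(Complex.I * ((t:ℂ) * (ω:ℂ)))) • Z) with hX1
  set X2 := exp ((Complex.I * (t:ℂ)) • Hw) with hX2
  have hq1 : X2' * exp (t • A1) = 1 := by
    have : t • A1 = -((Complex.I * (t:ℂ)) • Hw') := by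
      rw [hA1, smul_collapse]; module
    rw [this, hX2']; exact exp_mul_exp_neg _
  have hq2 : X1' * exp (t • A2) = 1 := by
    have h1 : (-(Complex.I * ((t:ℂ) * (ω':ℂ)))) • Z = -(t • A2) := by
      rw [hA2, smul_collapse]; module
    rw [hX1', h1]; exact exp_neg_mul_exp _
  have hq3 : exp (t • A3) = X1 := by
    rw [hX1, hA3, smul_collapse]; congr 1; ring
  have hq4 : exp (t • A4) = X2 := by
    rw [hX2, hA4, smul_collapse]; congr 1; ring
  have hU : (X1' * X2') * G t = X1 * X2 := by
    rw [hGdef]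
    show (X1' * X2') * (exp (t • A1) * exp (t • A2) * exp (t • A3) * exp (t • A4))
        = X1 * X2
    calc (X1' * X2') * (exp (t • A1) * exp (t • A2) * exp (t • A3) * exp (t • A4))
        = X1' * (X2' * exp (t • A1)) * exp (t • A2) * (exp (t • A3) * exp (t • A4)) := by
          noncomm_ring
      _ = X1' * exp (t • A2) * (exp (t • A3) * exp (t • A4)) := by
          rw [hq1, mul_one]
      _ = exp (t • A3) * exp (t • A4) := by rw [hq2, one_mul]
      _ = X1 * X2 := by rw [hq3, hq4]
  have hW : ‖X1' * X2'‖ ≤ 1 := by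
    have hn1 : ‖X1'‖ ≤ 1 := by
      rw [hX1']
      refine norm_exp_le Z hZ _ ?_
      simp [Complex.ext_iff]
    have hn2 : ‖X2'‖ ≤ 1 := by
      rw [hX2']
      refine norm_exp_le Hw' hH'sa _ ?_
      simp [Complex.ext_iff]
    refine le_trans (norm_mul_le _ _) ?_
    nlinarith [norm_nonneg X1', norm_nonneg X2']
  calc ‖X1' * X2' - X1 * X2‖ = ‖(X1' * X2') * (1 - G t)‖ := by
        rw [mul_one_sub, hU]
    _ ≤ ‖X1' * X2'‖ * ‖1 - G t‖ := norm_mul_le _ _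
    _ ≤ 1 * ‖1 - G t‖ := mul_le_mul_of_nonneg_right hW (norm_nonneg _)
    _ = ‖G t - G 0‖ := by rw [one_mul, hG0, norm_sub_rev]
    _ ≤ t * |ω' - ω| * ‖Z * V - V * Z‖ * ‖t - 0‖ := hmvt
    _ = t ^ 2 * |ω' - ω| * ‖Z * V - V * Z‖ := by
        rw [sub_zero, Real.norm_eq_abs, abs_of_nonneg ht.le]; ring


end Stmt19Aux

/-- Stability of the interaction-picture unitary `U(ω) = e^{-itωZ} e^{itH_ω}` with
`H_ω = V + ωZ`: `‖U(ω') − U(ω)‖ ≤ t²|ω' − ω|·‖[Z,V]‖`. -/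
theorem stmt_19 {n : ℕ}
    (V Z : EuclideanSpace ℂ (Fin n) →L[ℂ] EuclideanSpace ℂ (Fin n))
    (hV : IsSelfAdjoint V) (hZ : IsSelfAdjoint Z) (t : ℝ) (ht : 0 < t) (ω ω' : ℝ) :
    ‖exp ((-(Complex.I * (t * ω'))) • Z) * exp ((Complex.I * t) • (V + (ω' : ℂ) • Z)) -
        exp ((-(Complex.I * (t * ω))) • Z) * exp ((Complex.I * t) • (V + (ω : ℂ) • Z))‖ ≤
      t ^ 2 * |ω' - ω| * ‖Z * V - V * Z‖ := by
  have h := Stmt19Aux.keyC V Z hV hZ t ht ω ω'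
  exact h
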